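/- arXiv:math/0510272 — 2 statements merged into one kernel-verified Lean document; each statement's English description precedes it below -/
import Mathlib

section
/- In a finitely complete and finitely cocomplete monoidal biclosed category V with projective unit, let Q be a cyclic object (i.e., the functors {-, Q} and [-, Q] are naturally isomorphic; write [[-, Q]] for this functor) such that [[-, Q]] : V^op → V is conservative and preserves regular epimorphisms. Then a morphism f : X → Y is left pure if and only if it is right pure, and both hold if and only if [[f, Q]] : [[Y, Q]] → [[X, Q]] is a split epimorphism. -/
open CategoryTheory CategoryTheory.Limits CategoryTheory.MonoidalCategory
  CategoryTheory.MonoidalClosed Opposite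

set_option linter.unusedSectionVars false

section Aux
variable {V : Type*} [Category V] [MonoidalCategory V] [MonoidalClosed V] {Q : V}

private lemma curry_pre_app {A' A W : V} (g : A' ⟶ A) (φ : A ⊗ W ⟶ Q) :
    curry ((g ▷ W) ≫ φ) = curry φ ≫ (pre g).app Q := by
  apply uncurry_injective
  rw [uncurry_curry, uncurry_eq, MonoidalCategory.whiskerLeft_comp, Category.assoc,
    id_tensor_pre_app_comp_ev, whisker_exchange_assoc]
  rw [← uncurry_eq, uncurry_curry]

private lemma uncurry_comp_pre_app {A B W : V} (h : A ⟶ B) (t : W ⟶ (ihom B).obj Q) :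
    uncurry (t ≫ (pre h).app Q) = (h ▷ W) ≫ uncurry t := by
  apply curry_injective
  rw [curry_uncurry, _root_.curry_pre_app, curry_uncurry]

/-- The opposite of a regular mono is a regular epi. -/
private noncomputable def regularEpiOpOfRegularMono {A B : V} (h : A ⟶ B) (r : RegularMono h) :
    RegularEpi h.op where
  W := op r.Z
  left := r.left.op
  right := r.right.op
  w := by rw [← op_comp, ← op_comp, r.w]
  isColimit := by
    apply Cofork.IsColimit.mk _ (fun s => (Fork.IsLimit.lift' r.isLimit s.π.unop
      (Quiver.Hom.op_inj (by simpa using s.condition))).1.op)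
    · intro s
      apply Quiver.Hom.unop_inj
      have := (Fork.IsLimit.lift' r.isLimit s.π.unop
        (Quiver.Hom.op_inj (by simpa using s.condition))).2
      simpa using this
    · intro s m hm
      apply Quiver.Hom.unop_inj
      letI : Mono h := mono_of_isLimit_fork r.isLimit
      rw [← cancel_mono h]
      have := (Fork.IsLimit.lift' r.isLimit s.π.unop
        (Quiver.Hom.op_inj (by simpa using s.condition))).2
      simp only [Fork.ι_ofι] at this
      simp only [Quiver.Hom.unop_op, this]
      exact Quiver.Hom.op_inj (by simpa using hm)

/-- An iso composed with a regular mono is a regular mono. -/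
private noncomputable def regularMonoIsoComp {A E B : V} (k : A ⟶ E) (m : E ⟶ B)
    [IsIso k] (r : RegularMono m) : RegularMono (k ≫ m) where
  Z := r.Z
  left := r.left
  right := r.right
  w := by rw [Category.assoc, Category.assoc, r.w]
  isLimit := by
    letI := r
    haveI : Mono m := mono_of_isLimit_fork r.isLimit
    apply Fork.IsLimit.mk' _ (fun s => ?_)
    have hlift := (Fork.IsLimit.lift' r.isLimit s.ι s.condition).2
    simp only [Fork.ι_ofι] at hlift
    refine ⟨(Fork.IsLimit.lift' r.isLimit s.ι s.condition).1 ≫ inv k, ?_, ?_⟩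
    · simp [hlift]
    · intro w hw
      simp only [Fork.ι_ofι] at hw
      have h2 : w ≫ k = (Fork.IsLimit.lift' r.isLimit s.ι s.condition).1 := by
        rw [← cancel_mono m, hlift, ← hw, Category.assoc]
      simp [← h2]

private lemma isSplitEpi_map_of_natIso {F G : Vᵒᵖ ⥤ V} (e : F ≅ G) {X Y : Vᵒᵖ} (k : X ⟶ Y)
    (hs : IsSplitEpi (F.map k)) : IsSplitEpi (G.map k) := by
  obtain ⟨s, hs⟩ := hs
  refine ⟨⟨⟨e.inv.app Y ≫ s ≫ e.hom.app X, ?_⟩⟩⟩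
  rw [Category.assoc, Category.assoc, ← e.hom.naturality k, ← Category.assoc s, hs,
    Category.id_comp, e.inv_hom_id_app]

/-- Maps into `Q` extend along regular monomorphisms, by projectivity of the unit and
the fact that `[[-,Q]]` sends regular monos to regular epis. -/
private lemma ext_along (ihomL : Vᵒᵖ ⥤ V ⥤ V)
    (hproj : ∀ {P B : V} (e : P ⟶ B), Nonempty (RegularEpi e) →
      ∀ g : 𝟙_ V ⟶ B, ∃ g', g' ≫ e = g)
    (hcyclic : MonoidalClosed.internalHom.flip.obj Q ≅ ihomL.flip.obj Q)
    (hregepi : ∀ {X Y : Vᵒᵖ} (g : X ⟶ Y), Nonempty (RegularEpi g) →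
      Nonempty (RegularEpi ((ihomL.flip.obj Q).map g)))
    {A B : V} (h : A ⟶ B) (hreg : Nonempty (RegularMono h)) (χ : A ⟶ Q) :
    ∃ χ' : B ⟶ Q, h ≫ χ' = χ := by
  have hre : Nonempty (RegularEpi ((ihomL.flip.obj Q).map h.op)) :=
    hregepi h.op ⟨regularEpiOpOfRegularMono h hreg.some⟩
  obtain ⟨g', hg'⟩ := hproj ((ihomL.flip.obj Q).map h.op) hre
    (curry ((ρ_ A).hom ≫ χ) ≫ hcyclic.hom.app (op A))
  set t : 𝟙_ V ⟶ (ihom B).obj Q := g' ≫ hcyclic.inv.app (op B) with ht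
  have key : t ≫ (pre h).app Q = curry ((ρ_ A).hom ≫ χ) := by
    have hnat : hcyclic.inv.app (op B) ≫ (pre h).app Q
        = (ihomL.flip.obj Q).map h.op ≫ hcyclic.inv.app (op A) :=
      (hcyclic.inv.naturality h.op).symm
    rw [ht]
    erw [Category.assoc, hnat, ← Category.assoc, hg', Category.assoc,
      hcyclic.hom_inv_id_app]
    exact Category.comp_id _
  refine ⟨(ρ_ B).inv ≫ uncurry t, ?_⟩
  have huncur : (h ▷ 𝟙_ V) ≫ uncurry t = (ρ_ A).hom ≫ χ := by
    rw [← uncurry_comp_pre_app, key, uncurry_curry]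
  rw [← Category.assoc, rightUnitor_inv_naturality, Category.assoc, huncur,
    ← Category.assoc, Iso.inv_hom_id, Category.id_comp]

/-- `{h,Q}` is a split epi iff maps `A ⊗ W ⟶ Q` extend along `h ▷ W`. -/
private lemma isSplitEpi_pre_iff {A B : V} (h : A ⟶ B) :
    IsSplitEpi ((pre h).app Q) ↔
      ∀ (W : V) (φ : A ⊗ W ⟶ Q), ∃ ψ : B ⊗ W ⟶ Q, (h ▷ W) ≫ ψ = φ := by
  constructor
  · rintro ⟨s, hs⟩ W φ
    refine ⟨uncurry (curry φ ≫ s), ?_⟩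
    rw [← uncurry_comp_pre_app, Category.assoc, hs, Category.comp_id, uncurry_curry]
  · intro hext
    obtain ⟨ψ, hψ⟩ := hext ((ihom A).obj Q) ((ihom.ev A).app Q)
    refine ⟨⟨⟨curry ψ, ?_⟩⟩⟩
    rw [← _root_.curry_pre_app, hψ, ← uncurry_id_eq_ev, curry_uncurry]

/-- Left purity implies the extension property for `f`. -/
private lemma lp_ext (ihomL : Vᵒᵖ ⥤ V ⥤ V)
    (adjL : ∀ X : V, tensorRight X ⊣ ihomL.obj (op X))
    (hcyclic : MonoidalClosed.internalHom.flip.obj Q ≅ ihomL.flip.obj Q)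
    (hE : ∀ {A B : V} (h : A ⟶ B), Nonempty (RegularMono h) → ∀ χ : A ⟶ Q,
      ∃ χ' : B ⟶ Q, h ≫ χ' = χ)
    {X Y : V} (f : X ⟶ Y) (LP : ∀ Z : V, Nonempty (RegularMono (Z ◁ f))) :
    ∀ (W : V) (φ : X ⊗ W ⟶ Q), ∃ ψ : Y ⊗ W ⟶ Q, (f ▷ W) ≫ ψ = φ := by
  intro W φ
  set n : X ⟶ (ihomL.obj (op W)).obj Q := (adjL W).homEquiv X Q φ with hn
  set n' : X ⟶ (ihom W).obj Q := n ≫ hcyclic.inv.app (op W) with hn'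
  obtain ⟨ψt, hψt⟩ := hE (W ◁ f) (LP W) (uncurry n')
  refine ⟨((adjL W).homEquiv Y Q).symm (curry ψt ≫ hcyclic.hom.app (op W)), ?_⟩
  have h1 : f ≫ (curry ψt ≫ hcyclic.hom.app (op W)) = n := by
    erw [← Category.assoc, ← curry_natural_left, hψt, curry_uncurry, hn', Category.assoc,
      hcyclic.inv_hom_id_app]
    exact Category.comp_id _
  calc (f ▷ W) ≫ ((adjL W).homEquiv Y Q).symm (curry ψt ≫ hcyclic.hom.app (op W))
      = (tensorRight W).map f ≫ ((adjL W).homEquiv Y Q).symm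
          (curry ψt ≫ hcyclic.hom.app (op W)) := rfl
    _ = ((adjL W).homEquiv X Q).symm (f ≫ (curry ψt ≫ hcyclic.hom.app (op W))) :=
        ((adjL W).homEquiv_naturality_left_symm _ _).symm
    _ = ((adjL W).homEquiv X Q).symm n := by rw [h1]
    _ = φ := by rw [hn, Equiv.symm_apply_apply]

/-- The extension property for `f` implies that for `f ▷ Z`. -/
private lemma ext_whiskerRight {X Y : V} (f : X ⟶ Y)
    (hf : ∀ (W : V) (φ : X ⊗ W ⟶ Q), ∃ ψ : Y ⊗ W ⟶ Q, (f ▷ W) ≫ ψ = φ) (Z : V) :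
    ∀ (W : V) (φ : (X ⊗ Z) ⊗ W ⟶ Q), ∃ ψ : (Y ⊗ Z) ⊗ W ⟶ Q, ((f ▷ Z) ▷ W) ≫ ψ = φ := by
  intro W φ
  obtain ⟨ψ', hψ'⟩ := hf (Z ⊗ W) ((α_ X Z W).inv ≫ φ)
  refine ⟨(α_ Y Z W).hom ≫ ψ', ?_⟩
  rw [← Category.assoc, associator_naturality_left, Category.assoc, hψ',
    ← Category.assoc, Iso.hom_inv_id, Category.id_comp]

/-- The extension property for `f` implies that for `Z ◁ f`. -/
private lemma ext_whiskerLeft (ihomL : Vᵒᵖ ⥤ V ⥤ V)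
    (adjL : ∀ X : V, tensorRight X ⊣ ihomL.obj (op X))
    (hcyclic : MonoidalClosed.internalHom.flip.obj Q ≅ ihomL.flip.obj Q)
    {X Y : V} (f : X ⟶ Y)
    (hf : ∀ (W : V) (φ : X ⊗ W ⟶ Q), ∃ ψ : Y ⊗ W ⟶ Q, (f ▷ W) ≫ ψ = φ) (Z : V) :
    ∀ (W : V) (φ : (Z ⊗ X) ⊗ W ⟶ Q), ∃ ψ : (Z ⊗ Y) ⊗ W ⟶ Q, ((Z ◁ f) ▷ W) ≫ ψ = φ := by
  intro W φ
  set m₁ : X ⊗ W ⟶ (ihom Z).obj Q := curry ((α_ Z X W).inv ≫ φ) with hm₁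
  set m₂ : X ⊗ W ⟶ (ihomL.obj (op Z)).obj Q := m₁ ≫ hcyclic.hom.app (op Z) with hm₂
  obtain ⟨ψ₁, hψ₁⟩ := hf (W ⊗ Z)
    ((α_ X W Z).inv ≫ ((adjL Z).homEquiv (X ⊗ W) Q).symm m₂)
  set m₂' : Y ⊗ W ⟶ (ihomL.obj (op Z)).obj Q :=
    (adjL Z).homEquiv (Y ⊗ W) Q ((α_ Y W Z).hom ≫ ψ₁) with hm₂'
  set m₁' : Y ⊗ W ⟶ (ihom Z).obj Q := m₂' ≫ hcyclic.inv.app (op Z) with hm₁'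
  refine ⟨(α_ Z Y W).hom ≫ uncurry m₁', ?_⟩
  have key2 : (f ▷ W) ≫ m₂' = m₂ := by
    have : (tensorRight Z).map (f ▷ W) ≫ (α_ Y W Z).hom ≫ ψ₁
        = ((adjL Z).homEquiv (X ⊗ W) Q).symm m₂ := by
      show ((f ▷ W) ▷ Z) ≫ (α_ Y W Z).hom ≫ ψ₁ = _
      rw [← Category.assoc, associator_naturality_left, Category.assoc, hψ₁,
        ← Category.assoc, Iso.hom_inv_id, Category.id_comp]
    rw [hm₂']
    rw [← Adjunction.homEquiv_naturality_left]
    rw [← Category.assoc] at this ⊢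
    rw [this, Equiv.apply_symm_apply]
  have key1 : (f ▷ W) ≫ m₁' = m₁ := by
    erw [hm₁', ← Category.assoc, key2, hm₂, Category.assoc, hcyclic.hom_inv_id_app]
    exact Category.comp_id _
  rw [← Category.assoc, associator_naturality_middle, Category.assoc,
    ← uncurry_natural_left, key1, hm₁, uncurry_curry, ← Category.assoc,
    Iso.hom_inv_id, Category.id_comp]

/-- Reflection: if `{g,Q}` is a split epi then `g` is a regular mono. -/
private lemma regularMono_of_isSplitEpi [HasFiniteLimits V] [HasFiniteColimits V]
    (ihomL : Vᵒᵖ ⥤ V ⥤ V)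
    (adjL : ∀ X : V, tensorRight X ⊣ ihomL.obj (op X))
    (hcyclic : MonoidalClosed.internalHom.flip.obj Q ≅ ihomL.flip.obj Q)
    (hcons : ∀ {X Y : Vᵒᵖ} (g : X ⟶ Y), IsIso ((ihomL.flip.obj Q).map g) → IsIso g)
    (hregepi : ∀ {X Y : Vᵒᵖ} (g : X ⟶ Y), Nonempty (RegularEpi g) →
      Nonempty (RegularEpi ((ihomL.flip.obj Q).map g)))
    {A B : V} (g : A ⟶ B)
    (hs : IsSplitEpi ((MonoidalClosed.internalHom.flip.obj Q).map g.op)) :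
    Nonempty (RegularMono g) := by
  set D' : Vᵒᵖ ⥤ V := MonoidalClosed.internalHom.flip.obj Q with hD'
  -- `D' = {-,Q}` is a right adjoint, since `V` is biclosed
  let e₂ : ∀ (W : V) (Yo : Vᵒᵖ),
      (op ((ihomL.obj (op W)).obj Q) ⟶ Yo) ≃ (W ⟶ D'.obj Yo) := fun W Yo =>
    ((opEquiv _ _).trans (((adjL W).homEquiv Yo.unop Q).symm)).trans
      ((ihom.adjunction Yo.unop).homEquiv W Q)
  have he : ∀ (W : V) (Yo Yo' : Vᵒᵖ) (k : Yo ⟶ Yo')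
      (h : op ((ihomL.obj (op W)).obj Q) ⟶ Yo),
      e₂ W Yo' (h ≫ k) = e₂ W Yo h ≫ D'.map k := by
    intro W Yo Yo' k h
    show curry (((adjL W).homEquiv Yo'.unop Q).symm (k.unop ≫ h.unop))
        = curry (((adjL W).homEquiv Yo.unop Q).symm h.unop) ≫ D'.map k
    rw [Adjunction.homEquiv_naturality_left_symm]
    exact curry_pre_app _ _
  let adj := Adjunction.adjunctionOfEquivLeft e₂ he
  haveI : PreservesLimitsOfSize.{0, 0} D' := adj.rightAdjoint_preservesLimits
  -- the cokernel pair of `g` and the comparison with the equalizer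
  set u : B ⟶ pushout g g := pushout.inl g g with hu
  set v : B ⟶ pushout g g := pushout.inr g g with hv
  have sq : IsPushout g g u v := IsPushout.of_hasPushout g g
  have sqD : IsPullback (D'.map v.op) (D'.map u.op) (D'.map g.op) (D'.map g.op) :=
    sq.op.map D'
  obtain ⟨s⟩ := hs.exists_splitEpi
  have hsid : s.section_ ≫ D'.map g.op = 𝟙 _ := s.id
  have hcomm : (D'.map g.op ≫ s.section_) ≫ D'.map g.op = 𝟙 _ ≫ D'.map g.op := by
    rw [Category.assoc, hsid, Category.comp_id, Category.id_comp]
  set w := sqD.lift (D'.map g.op ≫ s.section_) (𝟙 _) hcomm with hw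
  have hw1 : w ≫ D'.map v.op = D'.map g.op ≫ s.section_ := sqD.lift_fst _ _ _
  have hw2 : w ≫ D'.map u.op = 𝟙 _ := sqD.lift_snd _ _ _
  set m : equalizer u v ⟶ B := equalizer.ι u v with hm
  set k : A ⟶ equalizer u v := equalizer.lift g sq.w with hk
  have hkm : k ≫ m = g := equalizer.lift_ι g sq.w
  have fact1 : D'.map u.op ≫ D'.map m.op = D'.map v.op ≫ D'.map m.op := by
    rw [← D'.map_comp, ← D'.map_comp, ← op_comp, ← op_comp, equalizer.condition u v]
  have fact2 : D'.map g.op ≫ s.section_ ≫ D'.map m.op = D'.map m.op := by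
    calc D'.map g.op ≫ s.section_ ≫ D'.map m.op
        = (w ≫ D'.map v.op) ≫ D'.map m.op := by rw [hw1, Category.assoc]
      _ = w ≫ D'.map u.op ≫ D'.map m.op := by rw [Category.assoc, fact1]
      _ = D'.map m.op := by rw [← Category.assoc, hw2, Category.id_comp]
  have hDg : D'.map g.op = D'.map m.op ≫ D'.map k.op := by
    rw [← D'.map_comp, ← op_comp, hkm]
  -- `D'` applied to `m` is an epimorphism
  haveI rm : RegularMono m := RegularMono.equalizer u v
  obtain ⟨re⟩ := hregepi m.op ⟨regularEpiOpOfRegularMono m rm⟩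
  haveI := RegularEpi.epi _ re
  have hDm_eq : D'.map m.op
      = hcyclic.hom.app (op B) ≫ (ihomL.flip.obj Q).map m.op ≫ hcyclic.inv.app _ := by
    rw [← Category.assoc, ← hcyclic.hom.naturality m.op, Category.assoc,
      hcyclic.hom_inv_id_app, Category.comp_id]
  haveI hepi : Epi (D'.map m.op) := by
    rw [hDm_eq]; exact epi_comp _ _
  -- the comparison map `k` is invertible
  have htk : (s.section_ ≫ D'.map m.op) ≫ D'.map k.op = 𝟙 _ := by
    rw [Category.assoc, ← hDg, hsid]
  have hkt : D'.map k.op ≫ s.section_ ≫ D'.map m.op = 𝟙 _ := by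
    rw [← cancel_epi (D'.map m.op), Category.comp_id, ← Category.assoc, ← hDg, fact2]
  haveI : IsIso (D'.map k.op) := ⟨s.section_ ≫ D'.map m.op, hkt, htk⟩
  have hIk : IsIso ((ihomL.flip.obj Q).map k.op) := by
    have hnat : (ihomL.flip.obj Q).map k.op
        = hcyclic.inv.app _ ≫ D'.map k.op ≫ hcyclic.hom.app _ := by
      rw [← Category.assoc, ← hcyclic.inv.naturality k.op, Category.assoc,
        hcyclic.inv_hom_id_app, Category.comp_id]
    rw [hnat]
    infer_instance
  haveI : IsIso k.op := hcons k.op hIk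
  haveI : IsIso k := isIso_of_op k
  exact ⟨hkm ▸ regularMonoIsoComp k m rm⟩

end Aux

/-- In a finitely complete and finitely cocomplete monoidal biclosed
category `V` with projective unit, let `Q` be a cyclic object (the functors `{-, Q}` and
`[-, Q]` are naturally isomorphic; write `[[-, Q]]` for this functor), such that
`[[-, Q]] : Vᵒᵖ ⥤ V` is conservative and preserves regular epimorphisms.  Then a
morphism `f : X ⟶ Y` is left pure iff it is right pure, and both hold iff
`[[f, Q]] : [[Y, Q]] ⟶ [[X, Q]]` is a split epimorphism.

Here the biclosed structure is given by `MonoidalClosed` (providing `{X,-}`, right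
adjoint to `X ⊗ -`) together with a bifunctor `ihomL` where `ihomL.obj (op X) = [X,-]`
is right adjoint to `- ⊗ X`, and `[[-,Q]] = ihomL.flip.obj Q`, which is required to be
naturally isomorphic to `{-,Q} = internalHom.flip.obj Q` (cyclicity of `Q`). -/
theorem stmt3 {V : Type*} [Category V] [MonoidalCategory V] [MonoidalClosed V]
    [HasFiniteLimits V] [HasFiniteColimits V]
    -- biclosedness: a bifunctor `[-,-]` with `- ⊗ X ⊣ [X,-]` for all `X`
    (ihomL : Vᵒᵖ ⥤ V ⥤ V)
    (adjL : ∀ X : V, tensorRight X ⊣ ihomL.obj (op X))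
    -- the unit object is projective with respect to regular epimorphisms
    (hproj : ∀ {P B : V} (e : P ⟶ B), Nonempty (RegularEpi e) →
      ∀ g : 𝟙_ V ⟶ B, ∃ g', g' ≫ e = g)
    (Q : V)
    -- `Q` is cyclic: `{-, Q} ≅ [-, Q]`
    (hcyclic : MonoidalClosed.internalHom.flip.obj Q ≅ ihomL.flip.obj Q)
    -- `[[-, Q]] : Vᵒᵖ ⥤ V` is conservative
    (hcons : ∀ {X Y : Vᵒᵖ} (g : X ⟶ Y), IsIso ((ihomL.flip.obj Q).map g) → IsIso g)
    -- `[[-, Q]] : Vᵒᵖ ⥤ V` preserves regular epimorphisms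
    (hregepi : ∀ {X Y : Vᵒᵖ} (g : X ⟶ Y), Nonempty (RegularEpi g) →
      Nonempty (RegularEpi ((ihomL.flip.obj Q).map g)))
    {X Y : V} (f : X ⟶ Y) :
    ((∀ Z : V, Nonempty (RegularMono (Z ◁ f))) ↔
        (∀ Z : V, Nonempty (RegularMono (f ▷ Z)))) ∧
      ((∀ Z : V, Nonempty (RegularMono (Z ◁ f))) ↔
        IsSplitEpi ((ihomL.flip.obj Q).map f.op)) := by
  -- extension of maps into `Q` along regular monos
  have hE : ∀ {A B : V} (h : A ⟶ B), Nonempty (RegularMono h) → ∀ χ : A ⟶ Q,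
      ∃ χ' : B ⟶ Q, h ≫ χ' = χ := fun h hr χ => ext_along ihomL hproj hcyclic hregepi h hr χ
  -- left purity implies split epi
  have lp_se : (∀ Z : V, Nonempty (RegularMono (Z ◁ f))) →
      IsSplitEpi ((MonoidalClosed.pre f).app Q) := fun LP =>
    (isSplitEpi_pre_iff f).mpr (lp_ext ihomL adjL hcyclic hE f LP)
  -- right purity implies split epi
  have rp_se : (∀ Z : V, Nonempty (RegularMono (f ▷ Z))) →
      IsSplitEpi ((MonoidalClosed.pre f).app Q) := fun RP =>
    (isSplitEpi_pre_iff f).mpr fun W φ => hE (f ▷ W) (RP W) φ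
  -- split epi implies left purity
  have se_lp : IsSplitEpi ((MonoidalClosed.pre f).app Q) →
      ∀ Z : V, Nonempty (RegularMono (Z ◁ f)) := fun hse Z =>
    regularMono_of_isSplitEpi ihomL adjL hcyclic hcons hregepi (Z ◁ f)
      ((isSplitEpi_pre_iff (Z ◁ f)).mpr
        (ext_whiskerLeft ihomL adjL hcyclic f ((isSplitEpi_pre_iff f).mp hse) Z))
  -- split epi implies right purity
  have se_rp : IsSplitEpi ((MonoidalClosed.pre f).app Q) →
      ∀ Z : V, Nonempty (RegularMono (f ▷ Z)) := fun hse Z =>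
    regularMono_of_isSplitEpi ihomL adjL hcyclic hcons hregepi (f ▷ Z)
      ((isSplitEpi_pre_iff (f ▷ Z)).mpr
        (ext_whiskerRight f ((isSplitEpi_pre_iff f).mp hse) Z))
  -- conversion between `{f,Q}` and `[[f,Q]]`
  have seiff : IsSplitEpi ((MonoidalClosed.pre f).app Q) ↔
      IsSplitEpi ((ihomL.flip.obj Q).map f.op) :=
    ⟨isSplitEpi_map_of_natIso hcyclic f.op, isSplitEpi_map_of_natIso hcyclic.symm f.op⟩
  exact ⟨⟨fun LP => se_rp (lp_se LP), fun RP => se_lp (rp_se RP)⟩,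
    ⟨fun LP => seiff.mp (lp_se LP), fun hse => se_lp (seiff.mpr hse)⟩⟩
end

section
/- Let K be a commutative ring, A a separable K-algebra, and i : A → B a homomorphism of K-algebras. Then i is a pure morphism of left A-modules if and only if it is a pure morphism of right A-modules. -/
open scoped TensorProduct
open MulOpposite

/-- The subgroup of `L ⊗[ℤ] M` by which one quotients to obtain the tensor product
`L ⊗[A] M` of a right `A`-module `L` and a left `A`-module `M` over a
(not necessarily commutative) ring `A`. -/
noncomputable def NCrel (A : Type) [Ring A] (L M : Type) [AddCommGroup L]
    [AddCommGroup M] [Module Aᵐᵒᵖ L] [Module A M] : AddSubgroup (L ⊗[ℤ] M) :=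
  AddSubgroup.closure
    {x | ∃ (l : L) (a : A) (m : M), x = (op a • l) ⊗ₜ[ℤ] m - l ⊗ₜ[ℤ] (a • m)}

/-- The tensor product `L ⊗[A] M` over a (not necessarily commutative) ring `A` of a
right `A`-module `L` and a left `A`-module `M`, as an abelian group. -/
abbrev NCT (A : Type) [Ring A] (L M : Type) [AddCommGroup L] [AddCommGroup M]
    [Module Aᵐᵒᵖ L] [Module A M] : Type :=
  (L ⊗[ℤ] M) ⧸ NCrel A L M

/-- The elementary tensor `l ⊗ m` in `L ⊗[A] M`. -/
noncomputable def NCT.tmul (A : Type) [Ring A] {L M : Type} [AddCommGroup L]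
    [AddCommGroup M] [Module Aᵐᵒᵖ L] [Module A M] (l : L) (m : M) : NCT A L M :=
  QuotientAddGroup.mk (l ⊗ₜ[ℤ] m)

/-- The map `L ⊗[A] f : L ⊗[A] M → L ⊗[A] N` induced by a morphism `f : M → N` of left
`A`-modules. -/
noncomputable def NCT.mapRight (A : Type) [Ring A] (L : Type) [AddCommGroup L]
    [Module Aᵐᵒᵖ L] {M N : Type} [AddCommGroup M] [AddCommGroup N] [Module A M]
    [Module A N] (f : M →+ N) (hf : ∀ (a : A) (m : M), f (a • m) = a • f m) :
    NCT A L M →+ NCT A L N :=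
  QuotientAddGroup.map _ _
    (TensorProduct.map LinearMap.id f.toIntLinearMap).toAddMonoidHom
    (by
      refine (AddSubgroup.closure_le _).mpr ?_
      rintro x ⟨l, a, m, rfl⟩
      simp only [SetLike.mem_coe, AddSubgroup.mem_comap, map_sub,
        LinearMap.toAddMonoidHom_coe, TensorProduct.map_tmul, LinearMap.id_coe, id_eq,
        AddMonoidHom.coe_toIntLinearMap]
      exact AddSubgroup.subset_closure ⟨l, a, f m, by rw [hf]⟩)

/-- The map `f ⊗[A] M : L ⊗[A] M → L' ⊗[A] M` induced by a morphism `f : L → L'` of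
right `A`-modules. -/
noncomputable def NCT.mapLeft (A : Type) [Ring A] {L L' : Type} [AddCommGroup L]
    [AddCommGroup L'] [Module Aᵐᵒᵖ L] [Module Aᵐᵒᵖ L'] (M : Type) [AddCommGroup M]
    [Module A M] (f : L →+ L') (hf : ∀ (a : Aᵐᵒᵖ) (l : L), f (a • l) = a • f l) :
    NCT A L M →+ NCT A L' M :=
  QuotientAddGroup.map _ _
    (TensorProduct.map f.toIntLinearMap LinearMap.id).toAddMonoidHom
    (by
      refine (AddSubgroup.closure_le _).mpr ?_
      rintro x ⟨l, a, m, rfl⟩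
      simp only [SetLike.mem_coe, AddSubgroup.mem_comap, map_sub,
        LinearMap.toAddMonoidHom_coe, TensorProduct.map_tmul, LinearMap.id_coe, id_eq,
        AddMonoidHom.coe_toIntLinearMap]
      exact AddSubgroup.subset_closure ⟨f l, a, m, by rw [hf]⟩)

/-- `i : A → B` is a pure morphism of left `A`-modules: for every right `A`-module `L`,
the map `L ⊗[A] i : L ⊗[A] A → L ⊗[A] B` is injective.  Here `B` is a left `A`-module
via `i`. -/
noncomputable def RingHom.LeftPure {A B : Type} [Ring A] [Ring B] (i : A →+* B) :
    Prop :=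
  ∀ (L : Type) (_ : AddCommGroup L) (_ : Module Aᵐᵒᵖ L),
    letI : Module A B := Module.compHom B i
    Function.Injective
      (NCT.mapRight A L (M := A) (N := B) i.toAddMonoidHom
        (fun a m => show i (a * m) = i a * i m from map_mul i a m))

/-- `i : A → B` is a pure morphism of right `A`-modules: for every left `A`-module `L`,
the map `i ⊗[A] L : A ⊗[A] L → B ⊗[A] L` is injective.  Here `B` is a right `A`-module
via `i`. -/
noncomputable def RingHom.RightPure {A B : Type} [Ring A] [Ring B] (i : A →+* B) :
    Prop :=
  ∀ (L : Type) (_ : AddCommGroup L) (_ : Module A L),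
    letI : Module Aᵐᵒᵖ B := Module.compHom B (RingHom.op i)
    Function.Injective
      (NCT.mapLeft A (L := A) (L' := B) L i.toAddMonoidHom
        (fun a l => show i (l * a.unop) = i l * i a.unop from map_mul i l a.unop))


/-- A `K`-algebra `A` is separable if the multiplication map `A ⊗[K] A → A` admits an
`(A,A)`-bimodule section, equivalently if there is a separability idempotent
`e ∈ A ⊗[K] A` with `(mul) e = 1` and `(a ⊗ 1) * e = e * (1 ⊗ a)` for all `a`
(equivalently, `A` is projective as an `(A,A)`-bimodule). -/
def IsSeparableAlgebra (K A : Type) [CommRing K] [Ring A] [Algebra K A] : Prop :=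
  ∃ e : A ⊗[K] A, LinearMap.mul' K A e = 1 ∧
    ∀ a : A, (a ⊗ₜ[K] (1 : A)) * e = e * ((1 : A) ⊗ₜ[K] a)


section Helpers

/-- Build a biadditive map from plain data. -/
def addBilin {L M T : Type} [AddCommGroup L] [AddCommGroup M] [AddCommGroup T]
    (f : L → M → T)
    (h1 : ∀ l l' m, f (l + l') m = f l m + f l' m)
    (h2 : ∀ l m m', f l (m + m') = f l m + f l m') : L →+ M →+ T :=
  AddMonoidHom.mk' (fun l => AddMonoidHom.mk' (f l) (h2 l))
    (fun l l' => AddMonoidHom.ext fun m => h1 l l' m)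

@[simp] lemma addBilin_apply {L M T : Type} [AddCommGroup L] [AddCommGroup M]
    [AddCommGroup T] (f : L → M → T) (h1) (h2) (l : L) (m : M) :
    addBilin f h1 h2 l m = f l m := rfl

variable {A : Type} [Ring A] {L M T : Type} [AddCommGroup L] [AddCommGroup M]
  [AddCommGroup T] [Module Aᵐᵒᵖ L] [Module A M]

noncomputable def NCT.lift (f : L →+ M →+ T)
    (hf : ∀ (a : A) (l : L) (m : M), f (op a • l) m = f l (a • m)) :
    NCT A L M →+ T :=
  QuotientAddGroup.lift _
    (TensorProduct.liftAddHom f (fun n l m => by simp))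
    (by
      refine (AddSubgroup.closure_le _).mpr ?_
      rintro x ⟨l, a, m, rfl⟩
      simp only [SetLike.mem_coe, AddMonoidHom.mem_ker, map_sub,
        TensorProduct.liftAddHom_tmul, hf, sub_self])

@[simp] lemma NCT.lift_tmul (f : L →+ M →+ T) (hf) (l : L) (m : M) :
    NCT.lift f hf (NCT.tmul A l m) = f l m := rfl

lemma NCT.tmul_rel (a : A) (l : L) (m : M) :
    NCT.tmul A (op a • l) m = NCT.tmul A l (a • m) := by
  refine (QuotientAddGroup.eq_iff_sub_mem).mpr ?_
  exact AddSubgroup.subset_closure ⟨l, a, m, rfl⟩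

lemma NCT.tmul_add_left (l l' : L) (m : M) :
    NCT.tmul A (l + l') m = NCT.tmul A l m + NCT.tmul A l' m := by
  show QuotientAddGroup.mk _ = _
  rw [TensorProduct.add_tmul]; rfl

lemma NCT.tmul_add_right (l : L) (m m' : M) :
    NCT.tmul A l (m + m') = NCT.tmul A l m + NCT.tmul A l m' := by
  show QuotientAddGroup.mk _ = _
  rw [TensorProduct.tmul_add]; rfl

@[simp] lemma NCT.tmul_zero_left (m : M) : NCT.tmul A (0 : L) m = 0 := by
  show QuotientAddGroup.mk _ = _
  rw [TensorProduct.zero_tmul]; rfl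

@[simp] lemma NCT.tmul_zero_right (l : L) : NCT.tmul A l (0 : M) = 0 := by
  show QuotientAddGroup.mk _ = _
  rw [TensorProduct.tmul_zero]; rfl

lemma NCT.ind {P : NCT A L M → Prop} (h0 : P 0)
    (ht : ∀ (l : L) (m : M), P (NCT.tmul A l m))
    (hadd : ∀ x y, P x → P y → P (x + y)) : ∀ z, P z := by
  intro z
  refine QuotientAddGroup.induction_on z (fun t => ?_)
  refine TensorProduct.induction_on t h0 (fun l m => ht l m) (fun x y hx hy => ?_)
  exact hadd _ _ hx hy

lemma NCT.mapRight_tmul {N : Type} [AddCommGroup N] [Module A N] (f : M →+ N)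
    (hf : ∀ (a : A) (m : M), f (a • m) = a • f m) (l : L) (m : M) :
    NCT.mapRight A L f hf (NCT.tmul A l m) = NCT.tmul A l (f m) := rfl

lemma NCT.mapLeft_tmul {L' : Type} [AddCommGroup L'] [Module Aᵐᵒᵖ L'] (f : L →+ L')
    (hf : ∀ (a : Aᵐᵒᵖ) (l : L), f (a • l) = a • f l) (l : L) (m : M) :
    NCT.mapLeft A M f hf (NCT.tmul A l m) = NCT.tmul A (f l) m := rfl

end Helpers
section Dir
variable {K A B : Type} [CommRing K] [Ring A] [Algebra K A] [Ring B] [Algebra K B]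

/-- The `K`-linear map `a ↦ a • m` for a left `A`-module `M`. -/
noncomputable def actL (M : Type) [AddCommGroup M] [Module A M] [Module K M]
    [IsScalarTower K A M] (m : M) : A →ₗ[K] M where
  toFun a := a • m
  map_add' x y := add_smul x y m
  map_smul' k x := smul_assoc k x m

@[simp] lemma actL_apply (M : Type) [AddCommGroup M] [Module A M] [Module K M]
    [IsScalarTower K A M] (m : M) (a : A) : actL (K := K) M m a = a • m := rfl

/-- The `K`-linear map `a ↦ op a • l` for a right `A`-module `L`. -/
noncomputable def actR (L : Type) [AddCommGroup L] [Module Aᵐᵒᵖ L] [Module K L]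
    [IsScalarTower K Aᵐᵒᵖ L] (l : L) : A →ₗ[K] L where
  toFun a := op a • l
  map_add' x y := by show op (x + y) • l = op x • l + op y • l; rw [op_add, add_smul]
  map_smul' k x := by show op (k • x) • l = k • (op x • l); rw [op_smul, smul_assoc]

@[simp] lemma actR_apply (L : Type) [AddCommGroup L] [Module Aᵐᵒᵖ L] [Module K L]
    [IsScalarTower K Aᵐᵒᵖ L] (l : L) (a : A) : actR (K := K) L l a = op a • l := rfl

theorem step1_left {M : Type} [AddCommGroup M] [Module A M] [Module K M]
    [IsScalarTower K A M] (i : A →ₐ[K] B) (hp : RingHom.LeftPure i.toRingHom) :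
    Function.Injective
      (TensorProduct.map i.toLinearMap (LinearMap.id (R := K) (M := M))) := by
  classical
  letI : Module A B := Module.compHom B i.toRingHom
  have hsmulB : ∀ (a : A) (b : B), a • b = i a * b := fun a b => rfl
  -- the middle map, injective by purity
  have hmid := hp (A ⊗[K] M) inferInstance inferInstance
  -- β : NCT A (A ⊗ M) B →+ B ⊗ M
  set β : NCT A (A ⊗[K] M) B →+ B ⊗[K] M :=
    NCT.lift (addBilin
      (fun l₀ b => TensorProduct.map ((LinearMap.mulRight K b).comp i.toLinearMap)
        (LinearMap.id) l₀)
      (fun l₀ l₀' b => map_add _ _ _)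
      (fun l₀ b b' => by
        refine TensorProduct.induction_on l₀ (by simp) (fun a m => ?_)
          (fun x y hx hy => by simp only [map_add, hx, hy]; abel)
        simp [TensorProduct.map_tmul, mul_add, TensorProduct.add_tmul]))
      (by
        intro a l₀ b
        simp only [addBilin_apply]
        refine TensorProduct.induction_on l₀ (by simp) (fun a' m => ?_)
          (fun x y hx hy => by simp only [map_add, smul_add, hx, hy])
        rw [TensorProduct.smul_tmul']
        simp only [TensorProduct.map_tmul, LinearMap.coe_comp, Function.comp_apply,
          AlgHom.toLinearMap_apply, LinearMap.mulRight_apply, LinearMap.id_coe, id_eq]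
        rw [op_smul_eq_mul, hsmulB, map_mul, mul_assoc]) with hβdef
  have hβ : ∀ (l₀ : A ⊗[K] M) (b : B),
      β (NCT.tmul A l₀ b)
        = TensorProduct.map ((LinearMap.mulRight K b).comp i.toLinearMap)
            LinearMap.id l₀ := fun l₀ b => rfl
  clear hβdef
  -- β' : left inverse of β
  set β' : B ⊗[K] M →+ NCT A (A ⊗[K] M) B :=
    TensorProduct.liftAddHom (addBilin
      (fun b m => NCT.tmul A ((1 : A) ⊗ₜ[K] m) b)
      (fun b b' m => NCT.tmul_add_right _ _ _)
      (fun b m m' => by rw [TensorProduct.tmul_add, NCT.tmul_add_left]))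
      (by
        intro k b m
        simp only [addBilin_apply]
        have h1 : (1 : A) ⊗ₜ[K] (k • m) = (algebraMap K A k) ⊗ₜ[K] m := by
          rw [TensorProduct.tmul_smul, TensorProduct.smul_tmul', Algebra.algebraMap_eq_smul_one]
        have h2 : (algebraMap K A k) ⊗ₜ[K] m
            = op (algebraMap K A k) • ((1 : A) ⊗ₜ[K] m) := by
          rw [TensorProduct.smul_tmul', op_smul_eq_mul, one_mul]
        rw [h1, h2, NCT.tmul_rel, hsmulB, AlgHom.commutes, ← Algebra.smul_def])
      with hβ'def
  have hβ' : ∀ (b : B) (m : M),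
      β' (b ⊗ₜ[K] m) = NCT.tmul A ((1 : A) ⊗ₜ[K] m) b := fun b m => by
    rw [hβ'def, TensorProduct.liftAddHom_tmul, addBilin_apply]
  clear hβ'def
  have hββ' : ∀ z, β' (β z) = z := by
    refine NCT.ind (by simp) (fun l₀ b => ?_) (fun x y hx hy => by
      simp only [map_add, hx, hy])
    rw [hβ l₀ b]
    refine TensorProduct.induction_on l₀ (by simp) (fun a m => ?_)
      (fun x y hx hy => by
        simp only [map_add, NCT.tmul_add_left, hx, hy])
    simp only [TensorProduct.map_tmul, LinearMap.coe_comp, Function.comp_apply,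
      AlgHom.toLinearMap_apply, LinearMap.mulRight_apply, LinearMap.id_coe, id_eq]
    rw [hβ', ← hsmulB, ← NCT.tmul_rel]
    congr 1
    rw [TensorProduct.smul_tmul', op_smul_eq_mul, one_mul]
  -- retraction of α : l₀ ↦ tmul l₀ 1
  set r : NCT A (A ⊗[K] M) A →+ A ⊗[K] M :=
    NCT.lift (addBilin (fun l₀ a => op a • l₀)
      (fun l₀ l₀' a => smul_add _ _ _)
      (fun l₀ a a' => by rw [op_add, add_smul]))
      (by
        intro a l₀ a'
        simp only [addBilin_apply]
        show op a' • op a • l₀ = op (a * a') • l₀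
        rw [op_mul, mul_smul]) with hrdef
  have hr : ∀ (l₀ : A ⊗[K] M) (a : A), r (NCT.tmul A l₀ a) = op a • l₀ :=
    fun l₀ a => rfl
  clear hrdef
  -- composite computation
  have hcomm : ∀ x : A ⊗[K] M,
      β (NCT.mapRight A (A ⊗[K] M) (M := A) (N := B) i.toRingHom.toAddMonoidHom
          (fun a m => show i.toRingHom (a * m) = i.toRingHom a * i.toRingHom m from
            map_mul i.toRingHom a m) (NCT.tmul A x 1))
        = TensorProduct.map i.toLinearMap LinearMap.id x := by
    intro x
    rw [NCT.mapRight_tmul, hβ]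
    refine TensorProduct.induction_on x (by simp) (fun a m => ?_)
      (fun x y hx hy => by simp only [map_add, hx, hy])
    simp only [TensorProduct.map_tmul, LinearMap.coe_comp, Function.comp_apply,
      AlgHom.toLinearMap_apply, LinearMap.mulRight_apply, LinearMap.id_coe, id_eq]
    congr 1
    show i a * i.toRingHom 1 = i a
    rw [map_one, mul_one]
  -- conclude
  intro x y hxy
  have h1 := hxy
  rw [← hcomm x, ← hcomm y] at h1
  have h2 := congrArg β' h1
  rw [hββ', hββ'] at h2
  have h3 := hmid h2
  have h4 := congrArg r h3
  rw [hr, hr, op_one, one_smul, one_smul] at h4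
  exact h4


theorem leftPure_rightPure (i : A →ₐ[K] B) (hA : IsSeparableAlgebra K A)
    (hp : RingHom.LeftPure i.toRingHom) : RingHom.RightPure i.toRingHom := by
  obtain ⟨e, he1, he2⟩ := hA
  intro M _ _
  letI : Module K M := Module.compHom M (algebraMap K A)
  haveI : IsScalarTower K A M := ⟨fun k a m => by
    show (k • a) • m = algebraMap K A k • (a • m)
    rw [Algebra.smul_def, mul_smul]⟩
  letI : Module Aᵐᵒᵖ B := Module.compHom B (RingHom.op i.toRingHom)
  have hsmulB : ∀ (a : A) (b : B), op a • b = b * i a := fun a b => rfl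
  have hsmulM : ∀ (k : K) (m : M), k • m = algebraMap K A k • m := fun k m => rfl
  -- s_A : NCT A A M →+ A ⊗[K] M
  set sA : NCT A A M →+ A ⊗[K] M :=
    NCT.lift (addBilin
      (fun l m => TensorProduct.map (LinearMap.mulLeft K l) (actL (K := K) M m) e)
      (fun l l' m => by
        have h : LinearMap.mulLeft K (l + l')
            = LinearMap.mulLeft K l + LinearMap.mulLeft K l' :=
          LinearMap.ext fun x => add_mul l l' x
        rw [h, TensorProduct.map_add_left, LinearMap.add_apply])
      (fun l m m' => by
        have h : actL (K := K) (A := A) M (m + m') = actL (K := K) (A := A) M m + actL (K := K) (A := A) M m' :=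
          LinearMap.ext fun a =>
            show a • (m + m') = a • m + a • m' from smul_add a m m'
        rw [h, TensorProduct.map_add_right, LinearMap.add_apply]))
      (by
        intro a l m
        simp only [addBilin_apply]
        have hK1 : ∀ t : A ⊗[K] A,
            TensorProduct.map (LinearMap.mulLeft K (l * a)) (actL (K := K) M m) t
              = TensorProduct.map (LinearMap.mulLeft K l) (actL (K := K) M m)
                  ((a ⊗ₜ[K] (1 : A)) * t) := by
          intro t
          refine TensorProduct.induction_on t (by simp) (fun x y => ?_)
            (fun u v hu hv => by simp only [map_add, mul_add, hu, hv])
          rw [Algebra.TensorProduct.tmul_mul_tmul]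
          simp only [TensorProduct.map_tmul, LinearMap.mulLeft_apply, actL_apply,
            one_mul, mul_assoc]
        have hK2 : ∀ t : A ⊗[K] A,
            TensorProduct.map (LinearMap.mulLeft K l) (actL (K := K) M (a • m)) t
              = TensorProduct.map (LinearMap.mulLeft K l) (actL (K := K) M m)
                  (t * ((1 : A) ⊗ₜ[K] a)) := by
          intro t
          refine TensorProduct.induction_on t (by simp) (fun x y => ?_)
            (fun u v hu hv => by simp only [map_add, add_mul, hu, hv])
          rw [Algebra.TensorProduct.tmul_mul_tmul]
          simp only [TensorProduct.map_tmul, LinearMap.mulLeft_apply, actL_apply,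
            mul_one, mul_smul]
        rw [op_smul_eq_mul, hK1, he2, ← hK2]) with hsAdef
  have hsA : ∀ (l : A) (m : M),
      sA (NCT.tmul A l m)
        = TensorProduct.map (LinearMap.mulLeft K l) (actL (K := K) M m) e :=
    fun l m => rfl
  clear hsAdef
  -- retraction π : A ⊗[K] M →+ NCT A A M
  set piM : A ⊗[K] M →+ NCT A A M :=
    TensorProduct.liftAddHom (addBilin (fun a m => NCT.tmul A a m)
      (fun a a' m => NCT.tmul_add_left _ _ _)
      (fun a m m' => NCT.tmul_add_right _ _ _))
      (by
        intro k a m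
        simp only [addBilin_apply]
        have h1 : k • a = op (algebraMap K A k) • a := by
          rw [op_smul_eq_mul, ← Algebra.commutes k a, ← Algebra.smul_def]
        rw [h1, NCT.tmul_rel, hsmulM]) with hpidef
  have hpiM : ∀ (a : A) (m : M), piM (a ⊗ₜ[K] m) = NCT.tmul A a m := fun a m => by
    rw [hpidef, TensorProduct.liftAddHom_tmul, addBilin_apply]
  clear hpidef
  have hkey : ∀ (l : A) (m : M) (t : A ⊗[K] A),
      piM (TensorProduct.map (LinearMap.mulLeft K l) (actL (K := K) M m) t)
        = NCT.tmul A l ((LinearMap.mul' K A t) • m) := by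
    intro l m t
    refine TensorProduct.induction_on t (by simp) (fun x y => ?_)
      (fun u v hu hv => by
        simp only [map_add, hu, hv, add_smul, NCT.tmul_add_right])
    simp only [TensorProduct.map_tmul, LinearMap.mulLeft_apply, actL_apply,
      LinearMap.mul'_apply]
    rw [hpiM]
    have h2 : l * x = op x • l := Eq.symm (op_smul_eq_mul _ _)
    rw [h2, NCT.tmul_rel, ← mul_smul]
  have hretr : ∀ z : NCT A A M, piM (sA z) = z := by
    refine NCT.ind (by simp) (fun l m => ?_)
      (fun u v hu hv => by simp only [map_add, hu, hv])
    rw [hsA, hkey, he1, one_smul]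
  -- s_B : NCT A B M →+ B ⊗[K] M
  set sB : NCT A B M →+ B ⊗[K] M :=
    NCT.lift (addBilin
      (fun b m => TensorProduct.map ((LinearMap.mulLeft K b).comp i.toLinearMap)
        (actL (K := K) M m) e)
      (fun b b' m => by
        have h : (LinearMap.mulLeft K (b + b')).comp i.toLinearMap
            = (LinearMap.mulLeft K b).comp i.toLinearMap
              + (LinearMap.mulLeft K b').comp i.toLinearMap :=
          LinearMap.ext fun x => add_mul b b' (i x)
        rw [h, TensorProduct.map_add_left, LinearMap.add_apply])
      (fun b m m' => by
        have h : actL (K := K) (A := A) M (m + m') = actL (K := K) (A := A) M m + actL (K := K) (A := A) M m' :=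
          LinearMap.ext fun a =>
            show a • (m + m') = a • m + a • m' from smul_add a m m'
        rw [h, TensorProduct.map_add_right, LinearMap.add_apply]))
      (by
        intro a b m
        simp only [addBilin_apply]
        have hK1 : ∀ t : A ⊗[K] A,
            TensorProduct.map ((LinearMap.mulLeft K (b * i a)).comp i.toLinearMap)
                (actL (K := K) M m) t
              = TensorProduct.map ((LinearMap.mulLeft K b).comp i.toLinearMap)
                  (actL (K := K) M m) ((a ⊗ₜ[K] (1 : A)) * t) := by
          intro t
          refine TensorProduct.induction_on t (by simp) (fun x y => ?_)
            (fun u v hu hv => by simp only [map_add, mul_add, hu, hv])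
          rw [Algebra.TensorProduct.tmul_mul_tmul]
          simp only [TensorProduct.map_tmul, LinearMap.coe_comp, Function.comp_apply,
            AlgHom.toLinearMap_apply, LinearMap.mulLeft_apply, actL_apply, one_mul,
            map_mul, mul_assoc]
        have hK2 : ∀ t : A ⊗[K] A,
            TensorProduct.map ((LinearMap.mulLeft K b).comp i.toLinearMap)
                (actL (K := K) M (a • m)) t
              = TensorProduct.map ((LinearMap.mulLeft K b).comp i.toLinearMap)
                  (actL (K := K) M m) (t * ((1 : A) ⊗ₜ[K] a)) := by
          intro t
          refine TensorProduct.induction_on t (by simp) (fun x y => ?_)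
            (fun u v hu hv => by simp only [map_add, add_mul, hu, hv])
          rw [Algebra.TensorProduct.tmul_mul_tmul]
          simp only [TensorProduct.map_tmul, LinearMap.coe_comp, Function.comp_apply,
            AlgHom.toLinearMap_apply, LinearMap.mulLeft_apply, actL_apply, mul_one,
            mul_smul]
        rw [hsmulB, hK1, he2, ← hK2]) with hsBdef
  have hsB : ∀ (b : B) (m : M),
      sB (NCT.tmul A b m)
        = TensorProduct.map ((LinearMap.mulLeft K b).comp i.toLinearMap)
            (actL (K := K) M m) e := fun b m => rfl
  clear hsBdef
  -- naturality
  have hnat : ∀ z : NCT A A M,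
      sB (NCT.mapLeft A (L := A) (L' := B) M i.toRingHom.toAddMonoidHom
          (fun a l => show i.toRingHom (l * a.unop) = i.toRingHom l * i.toRingHom a.unop
            from map_mul i.toRingHom l a.unop) z)
        = TensorProduct.map i.toLinearMap LinearMap.id (sA z) := by
    refine NCT.ind (by simp) (fun l m => ?_)
      (fun u v hu hv => by simp only [map_add, hu, hv])
    show sB (NCT.tmul A (i.toRingHom.toAddMonoidHom l) m) = _
    rw [hsB, hsA]
    have h : ∀ t : A ⊗[K] A,
        TensorProduct.map ((LinearMap.mulLeft K (i.toRingHom.toAddMonoidHom l)).comp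
            i.toLinearMap) (actL (K := K) M m) t
          = TensorProduct.map i.toLinearMap LinearMap.id
              (TensorProduct.map (LinearMap.mulLeft K l) (actL (K := K) M m) t) := by
      intro t
      refine TensorProduct.induction_on t (by simp) (fun x y => ?_)
        (fun u v hu hv => by simp only [map_add, hu, hv])
      simp only [TensorProduct.map_tmul, LinearMap.coe_comp, Function.comp_apply,
        AlgHom.toLinearMap_apply, LinearMap.mulLeft_apply, actL_apply,
        LinearMap.id_coe, id_eq]
      congr 1
      show i l * i x = i (l * x)
      rw [map_mul]
    exact h e
  -- conclude injectivity
  intro z z' hzz'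
  have h2 := congrArg sB hzz'
  have h3 : TensorProduct.map i.toLinearMap LinearMap.id (sA z)
      = TensorProduct.map i.toLinearMap LinearMap.id (sA z') :=
    (hnat z).symm.trans (h2.trans (hnat z'))
  have h4 := step1_left (K := K) i hp h3
  have h5 := congrArg piM h4
  rw [hretr z, hretr z'] at h5
  exact h5


theorem step1_right {L : Type} [AddCommGroup L] [Module Aᵐᵒᵖ L] [Module K L]
    [IsScalarTower K Aᵐᵒᵖ L] (i : A →ₐ[K] B) (hp : RingHom.RightPure i.toRingHom) :
    Function.Injective
      (TensorProduct.map i.toLinearMap (LinearMap.id (R := K) (M := L))) := by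
  classical
  letI : Module Aᵐᵒᵖ B := Module.compHom B (RingHom.op i.toRingHom)
  have hsmulB : ∀ (a : A) (b : B), op a • b = b * i a := fun a b => rfl
  have hmid := hp (A ⊗[K] L) inferInstance inferInstance
  -- β : NCT A B (A ⊗ L) →+ B ⊗ L
  set β : NCT A B (A ⊗[K] L) →+ B ⊗[K] L :=
    NCT.lift (addBilin
      (fun b m₀ => TensorProduct.map ((LinearMap.mulLeft K b).comp i.toLinearMap)
        LinearMap.id m₀)
      (fun b b' m₀ => by
        have h : (LinearMap.mulLeft K (b + b')).comp i.toLinearMap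
            = (LinearMap.mulLeft K b).comp i.toLinearMap
              + (LinearMap.mulLeft K b').comp i.toLinearMap :=
          LinearMap.ext fun x => add_mul b b' (i x)
        rw [h, TensorProduct.map_add_left, LinearMap.add_apply])
      (fun b m₀ m₀' => map_add _ _ _))
      (by
        intro a b m₀
        simp only [addBilin_apply]
        refine TensorProduct.induction_on m₀ (by simp) (fun x l => ?_)
          (fun u v hu hv => by simp only [map_add, smul_add, hu, hv])
        rw [hsmulB, TensorProduct.smul_tmul']
        simp only [TensorProduct.map_tmul, LinearMap.coe_comp, Function.comp_apply,
          AlgHom.toLinearMap_apply, LinearMap.id_coe, id_eq, LinearMap.mulLeft_apply,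
          smul_eq_mul, map_mul, mul_assoc]) with hβdef
  have hβ : ∀ (b : B) (m₀ : A ⊗[K] L),
      β (NCT.tmul A b m₀)
        = TensorProduct.map ((LinearMap.mulLeft K b).comp i.toLinearMap)
            LinearMap.id m₀ := fun b m₀ => rfl
  clear hβdef
  -- β' : left inverse of β
  set β' : B ⊗[K] L →+ NCT A B (A ⊗[K] L) :=
    TensorProduct.liftAddHom (addBilin
      (fun b l => NCT.tmul A b ((1 : A) ⊗ₜ[K] l))
      (fun b b' l => NCT.tmul_add_left _ _ _)
      (fun b l l' => by rw [TensorProduct.tmul_add, NCT.tmul_add_right]))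
      (by
        intro k b l
        simp only [addBilin_apply]
        have h1 : (1 : A) ⊗ₜ[K] (k • l) = (algebraMap K A k) ⊗ₜ[K] l := by
          rw [TensorProduct.tmul_smul, TensorProduct.smul_tmul',
            Algebra.algebraMap_eq_smul_one]
        have h2 : (algebraMap K A k) ⊗ₜ[K] l
            = algebraMap K A k • ((1 : A) ⊗ₜ[K] l) := by
          rw [TensorProduct.smul_tmul', smul_eq_mul, mul_one]
        rw [h1, h2, ← NCT.tmul_rel, hsmulB]
        congr 1
        rw [AlgHom.commutes, Algebra.smul_def]
        exact Algebra.commutes k b) with hβ'def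
  have hβ' : ∀ (b : B) (l : L),
      β' (b ⊗ₜ[K] l) = NCT.tmul A b ((1 : A) ⊗ₜ[K] l) := fun b l => by
    rw [hβ'def, TensorProduct.liftAddHom_tmul, addBilin_apply]
  clear hβ'def
  have hββ' : ∀ z, β' (β z) = z := by
    refine NCT.ind (by simp) (fun b m₀ => ?_) (fun x y hx hy => by
      simp only [map_add, hx, hy])
    rw [hβ b m₀]
    refine TensorProduct.induction_on m₀ (by simp) (fun x l => ?_)
      (fun u v hu hv => by
        simp only [map_add, NCT.tmul_add_right, hu, hv])
    simp only [TensorProduct.map_tmul, LinearMap.coe_comp, Function.comp_apply,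
      AlgHom.toLinearMap_apply, LinearMap.mulLeft_apply, LinearMap.id_coe, id_eq]
    rw [hβ', ← hsmulB, NCT.tmul_rel]
    congr 1
    rw [TensorProduct.smul_tmul', smul_eq_mul, mul_one]
  -- retraction of α : x ↦ tmul 1 x
  set r : NCT A A (A ⊗[K] L) →+ A ⊗[K] L :=
    NCT.lift (addBilin (fun a m₀ => a • m₀)
      (fun a a' m₀ => by rw [add_smul])
      (fun a m₀ m₀' => smul_add _ _ _))
      (by
        intro a a' m₀
        simp only [addBilin_apply]
        show (op a • a') • m₀ = a' • (a • m₀)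
        rw [op_smul_eq_mul, mul_smul]) with hrdef
  have hr : ∀ (a : A) (m₀ : A ⊗[K] L), r (NCT.tmul A a m₀) = a • m₀ :=
    fun a m₀ => rfl
  clear hrdef
  -- composite computation
  have hcomm : ∀ x : A ⊗[K] L,
      β (NCT.mapLeft A (L := A) (L' := B) (A ⊗[K] L) i.toRingHom.toAddMonoidHom
          (fun a l => show i.toRingHom (l * a.unop) = i.toRingHom l * i.toRingHom a.unop
            from map_mul i.toRingHom l a.unop) (NCT.tmul A 1 x))
        = TensorProduct.map i.toLinearMap LinearMap.id x := by
    intro x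
    show β (NCT.tmul A (i.toRingHom.toAddMonoidHom 1) x) = _
    rw [hβ]
    refine TensorProduct.induction_on x (by simp) (fun a l => ?_)
      (fun u v hu hv => by simp only [map_add, hu, hv])
    simp only [TensorProduct.map_tmul, LinearMap.coe_comp, Function.comp_apply,
      AlgHom.toLinearMap_apply, LinearMap.mulLeft_apply, LinearMap.id_coe, id_eq]
    congr 1
    show i.toRingHom (1 : A) * i a = i a
    rw [map_one, one_mul]
  -- conclude
  intro x y hxy
  have h1 := hxy
  rw [← hcomm x, ← hcomm y] at h1
  have h2 := congrArg β' h1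
  rw [hββ', hββ'] at h2
  have h3 := hmid h2
  have h4 := congrArg r h3
  rw [hr, hr, one_smul, one_smul] at h4
  exact h4

theorem rightPure_leftPure (i : A →ₐ[K] B) (hA : IsSeparableAlgebra K A)
    (hp : RingHom.RightPure i.toRingHom) : RingHom.LeftPure i.toRingHom := by
  obtain ⟨e, he1, he2⟩ := hA
  intro L _ _
  letI : Module K L := Module.compHom L (algebraMap K Aᵐᵒᵖ)
  haveI : IsScalarTower K Aᵐᵒᵖ L := ⟨fun k a l => by
    show (k • a) • l = algebraMap K Aᵐᵒᵖ k • (a • l)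
    rw [Algebra.smul_def, mul_smul]⟩
  letI : Module A B := Module.compHom B i.toRingHom
  have hsmulB : ∀ (a : A) (b : B), a • b = i a * b := fun a b => rfl
  have hsmulL : ∀ (k : K) (l : L), k • l = op (algebraMap K A k) • l := fun k l => by
    show algebraMap K Aᵐᵒᵖ k • l = _
    rw [MulOpposite.algebraMap_apply]
  -- s_A : NCT A L A →+ A ⊗[K] L
  set sA : NCT A L A →+ A ⊗[K] L :=
    NCT.lift (addBilin
      (fun l a => TensorProduct.map (LinearMap.mulRight K a) (actR (K := K) L l)
        ((TensorProduct.comm K A A) e))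
      (fun l l' a => by
        have h : actR (K := K) (A := A) L (l + l')
            = actR (K := K) (A := A) L l + actR (K := K) (A := A) L l' :=
          LinearMap.ext fun x =>
            show op x • (l + l') = op x • l + op x • l' from smul_add _ _ _
        rw [h, TensorProduct.map_add_right, LinearMap.add_apply])
      (fun l a a' => by
        have h : LinearMap.mulRight K (a + a')
            = LinearMap.mulRight K a + LinearMap.mulRight K a' :=
          LinearMap.ext fun x => mul_add x a a'
        rw [h, TensorProduct.map_add_left, LinearMap.add_apply]))
      (by
        intro a' l a
        simp only [addBilin_apply]
        have hK1 : ∀ t : A ⊗[K] A,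
            TensorProduct.map (LinearMap.mulRight K a)
                (actR (K := K) L (op a' • l)) ((TensorProduct.comm K A A) t)
              = TensorProduct.map (LinearMap.mulRight K a) (actR (K := K) L l)
                  ((TensorProduct.comm K A A) ((a' ⊗ₜ[K] (1 : A)) * t)) := by
          intro t
          refine TensorProduct.induction_on t (by simp) (fun x y => ?_)
            (fun u v hu hv => by simp only [map_add, mul_add, hu, hv])
          rw [Algebra.TensorProduct.tmul_mul_tmul]
          simp only [TensorProduct.comm_tmul, TensorProduct.map_tmul,
            LinearMap.mulRight_apply, actR_apply, one_mul, op_mul, mul_smul]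
        have hK2 : ∀ t : A ⊗[K] A,
            TensorProduct.map (LinearMap.mulRight K (a' * a)) (actR (K := K) L l)
                ((TensorProduct.comm K A A) t)
              = TensorProduct.map (LinearMap.mulRight K a) (actR (K := K) L l)
                  ((TensorProduct.comm K A A) (t * ((1 : A) ⊗ₜ[K] a'))) := by
          intro t
          refine TensorProduct.induction_on t (by simp) (fun x y => ?_)
            (fun u v hu hv => by simp only [map_add, add_mul, hu, hv])
          rw [Algebra.TensorProduct.tmul_mul_tmul]
          simp only [TensorProduct.comm_tmul, TensorProduct.map_tmul,
            LinearMap.mulRight_apply, actR_apply, mul_one, mul_assoc]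
        rw [hK1, he2, smul_eq_mul, ← hK2]) with hsAdef
  have hsA : ∀ (l : L) (a : A),
      sA (NCT.tmul A l a)
        = TensorProduct.map (LinearMap.mulRight K a) (actR (K := K) L l)
            ((TensorProduct.comm K A A) e) := fun l a => rfl
  clear hsAdef
  -- retraction π : A ⊗[K] L →+ NCT A L A
  set piL : A ⊗[K] L →+ NCT A L A :=
    TensorProduct.liftAddHom (addBilin (fun a l => NCT.tmul A l a)
      (fun a a' l => NCT.tmul_add_right _ _ _)
      (fun a l l' => NCT.tmul_add_left _ _ _))
      (by
        intro k a l
        simp only [addBilin_apply]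
        rw [hsmulL, NCT.tmul_rel, smul_eq_mul, Algebra.smul_def]) with hpidef
  have hpiL : ∀ (a : A) (l : L), piL (a ⊗ₜ[K] l) = NCT.tmul A l a := fun a l => by
    rw [hpidef, TensorProduct.liftAddHom_tmul, addBilin_apply]
  clear hpidef
  have hkey : ∀ (l : L) (a : A) (t : A ⊗[K] A),
      piL (TensorProduct.map (LinearMap.mulRight K a) (actR (K := K) L l)
          ((TensorProduct.comm K A A) t))
        = NCT.tmul A l ((LinearMap.mul' K A t) * a) := by
    intro l a t
    refine TensorProduct.induction_on t (by simp) (fun x y => ?_)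
      (fun u v hu hv => by
        simp only [map_add, hu, hv, add_mul, NCT.tmul_add_right])
    simp only [TensorProduct.comm_tmul, TensorProduct.map_tmul,
      LinearMap.mulRight_apply, actR_apply, LinearMap.mul'_apply]
    rw [hpiL, NCT.tmul_rel, smul_eq_mul, mul_assoc]
  have hretr : ∀ z : NCT A L A, piL (sA z) = z := by
    refine NCT.ind (by simp) (fun l a => ?_)
      (fun u v hu hv => by simp only [map_add, hu, hv])
    rw [hsA, hkey, he1, one_mul]
  -- s_B : NCT A L B →+ B ⊗[K] L
  set sB : NCT A L B →+ B ⊗[K] L :=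
    NCT.lift (addBilin
      (fun l b => TensorProduct.map ((LinearMap.mulRight K b).comp i.toLinearMap)
        (actR (K := K) L l) ((TensorProduct.comm K A A) e))
      (fun l l' b => by
        have h : actR (K := K) (A := A) L (l + l')
            = actR (K := K) (A := A) L l + actR (K := K) (A := A) L l' :=
          LinearMap.ext fun x =>
            show op x • (l + l') = op x • l + op x • l' from smul_add _ _ _
        rw [h, TensorProduct.map_add_right, LinearMap.add_apply])
      (fun l b b' => by
        have h : (LinearMap.mulRight K (b + b')).comp i.toLinearMap
            = (LinearMap.mulRight K b).comp i.toLinearMap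
              + (LinearMap.mulRight K b').comp i.toLinearMap :=
          LinearMap.ext fun x => mul_add (i x) b b'
        rw [h, TensorProduct.map_add_left, LinearMap.add_apply]))
      (by
        intro a l b
        simp only [addBilin_apply]
        have hK1 : ∀ t : A ⊗[K] A,
            TensorProduct.map ((LinearMap.mulRight K b).comp i.toLinearMap)
                (actR (K := K) L (op a • l)) ((TensorProduct.comm K A A) t)
              = TensorProduct.map ((LinearMap.mulRight K b).comp i.toLinearMap)
                  (actR (K := K) L l)
                  ((TensorProduct.comm K A A) ((a ⊗ₜ[K] (1 : A)) * t)) := by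
          intro t
          refine TensorProduct.induction_on t (by simp) (fun x y => ?_)
            (fun u v hu hv => by simp only [map_add, mul_add, hu, hv])
          rw [Algebra.TensorProduct.tmul_mul_tmul]
          simp only [TensorProduct.comm_tmul, TensorProduct.map_tmul,
            LinearMap.coe_comp, Function.comp_apply, AlgHom.toLinearMap_apply,
            LinearMap.mulRight_apply, actR_apply, one_mul, op_mul, mul_smul]
        have hK2 : ∀ t : A ⊗[K] A,
            TensorProduct.map ((LinearMap.mulRight K (i a * b)).comp i.toLinearMap)
                (actR (K := K) L l) ((TensorProduct.comm K A A) t)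
              = TensorProduct.map ((LinearMap.mulRight K b).comp i.toLinearMap)
                  (actR (K := K) L l)
                  ((TensorProduct.comm K A A) (t * ((1 : A) ⊗ₜ[K] a))) := by
          intro t
          refine TensorProduct.induction_on t (by simp) (fun x y => ?_)
            (fun u v hu hv => by simp only [map_add, add_mul, hu, hv])
          rw [Algebra.TensorProduct.tmul_mul_tmul]
          simp only [TensorProduct.comm_tmul, TensorProduct.map_tmul,
            LinearMap.coe_comp, Function.comp_apply, AlgHom.toLinearMap_apply,
            LinearMap.mulRight_apply, actR_apply, mul_one, map_mul, mul_assoc]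
        rw [hK1, he2, hsmulB, ← hK2]) with hsBdef
  have hsB : ∀ (l : L) (b : B),
      sB (NCT.tmul A l b)
        = TensorProduct.map ((LinearMap.mulRight K b).comp i.toLinearMap)
            (actR (K := K) L l) ((TensorProduct.comm K A A) e) := fun l b => rfl
  clear hsBdef
  -- naturality
  have hnat : ∀ z : NCT A L A,
      sB (NCT.mapRight A L (M := A) (N := B) i.toRingHom.toAddMonoidHom
          (fun a m => show i.toRingHom (a * m) = i.toRingHom a * i.toRingHom m
            from map_mul i.toRingHom a m) z)
        = TensorProduct.map i.toLinearMap LinearMap.id (sA z) := by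
    refine NCT.ind (by simp) (fun l a => ?_)
      (fun u v hu hv => by simp only [map_add, hu, hv])
    rw [NCT.mapRight_tmul, hsB, hsA]
    have h : ∀ u : A ⊗[K] A,
        TensorProduct.map ((LinearMap.mulRight K
            (i.toRingHom.toAddMonoidHom a)).comp i.toLinearMap) (actR (K := K) L l) u
          = TensorProduct.map i.toLinearMap LinearMap.id
              (TensorProduct.map (LinearMap.mulRight K a) (actR (K := K) L l) u) := by
      intro u
      refine TensorProduct.induction_on u (by simp) (fun p q => ?_)
        (fun u v hu hv => by simp only [map_add, hu, hv])
      simp only [TensorProduct.map_tmul, LinearMap.coe_comp, Function.comp_apply,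
        AlgHom.toLinearMap_apply, LinearMap.mulRight_apply, actR_apply,
        LinearMap.id_coe, id_eq]
      rw [map_mul]
      rfl
    exact h ((TensorProduct.comm K A A) e)
  -- conclude injectivity
  intro z z' hzz'
  have h2 := congrArg sB hzz'
  have h3 : TensorProduct.map i.toLinearMap LinearMap.id (sA z)
      = TensorProduct.map i.toLinearMap LinearMap.id (sA z') :=
    (hnat z).symm.trans (h2.trans (hnat z'))
  have h4 := step1_right (K := K) i hp h3
  have h5 := congrArg piL h4
  rw [hretr z, hretr z'] at h5
  exact h5

end Dir

/-- Let `K` be a commutative ring, `A` a separable `K`-algebra, and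
`i : A → B` a homomorphism of `K`-algebras.  Then `i` is a pure morphism of left
`A`-modules if and only if it is a pure morphism of right `A`-modules. -/
theorem stmt9 {K A B : Type} [CommRing K] [Ring A] [Algebra K A] [Ring B] [Algebra K B]
    (hA : IsSeparableAlgebra K A) (i : A →ₐ[K] B) :
    i.toRingHom.LeftPure ↔ i.toRingHom.RightPure :=
  ⟨fun h => leftPure_rightPure i hA h, fun h => rightPure_leftPure i hA h⟩
end
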